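/- (Wedin bound, under-specified rank) Let A be a rank-r matrix with rank-r̃ truncated SVD A_1 (r̃ < r) and write A = A_1 + A_0. Let Ã = Ũ Σ̃ Ṽ^T be the rank-r̃ truncated SVD of X = A + E. Then the sine of the largest principal angle between row(A_1) and row(Ã) is at most min( max(‖(E + A_0) Ṽ‖, ‖(E + A_0)^T Ũ‖) / σ_min(Ã), 1 ). -/

import Mathlib

open Matrix

/-- View a plain vector as an element of Euclidean space. -/
noncomputable def toEuc {n : ℕ} (v : Fin n → ℝ) : EuclideanSpace ℝ (Fin n) := WithLp.toLp 2 v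

/-- The row space of a matrix, as a subspace of Euclidean space `ℝ^n`. -/
noncomputable def rowSpace {m : Type*} {n : ℕ} (A : Matrix m (Fin n) ℝ) :
    Submodule ℝ (EuclideanSpace ℝ (Fin n)) :=
  Submodule.span ℝ (Set.range fun i => toEuc (A i))

/-- The orthogonal projection matrix onto a subspace of `ℝ^n`. -/
noncomputable def projMat {n : ℕ} (U : Submodule ℝ (EuclideanSpace ℝ (Fin n))) :
    Matrix (Fin n) (Fin n) ℝ :=
  Matrix.toEuclideanLin.symm (U.subtype ∘ₗ (U.orthogonalProjectionOnto).toLinearMap)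

/-- The operator (spectral) norm of a matrix. -/
noncomputable def opNorm {m : Type*} [Fintype m] {n : ℕ} (A : Matrix m (Fin n) ℝ) : ℝ :=
  ‖(Matrix.toEuclideanLin A).toContinuousLinearMap‖

/-- Singular values of a matrix, in ascending order. -/
noncomputable def svalAsc {m : Type*} [Fintype m] {n : ℕ} (A : Matrix m (Fin n) ℝ) :
    Fin n → ℝ := fun i =>
  Real.sqrt ((by simpa using Matrix.isHermitian_conjTranspose_mul_self A :
      (Aᵀ * A).IsHermitian).eigenvalues
    (Tuple.sort (by simpa using Matrix.isHermitian_conjTranspose_mul_self A :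
      (Aᵀ * A).IsHermitian).eigenvalues i))

/-- Singular values of a matrix, in descending order (`svalDesc A 0` is the largest). -/
noncomputable def svalDesc {m : Type*} [Fintype m] {n : ℕ} (A : Matrix m (Fin n) ℝ)
    (i : Fin n) : ℝ :=
  svalAsc A i.rev

noncomputable def toE {ι : Type*} (v : ι → ℝ) : EuclideanSpace ℝ ι := WithLp.toLp 2 v

lemma inner_toE {ι : Type*} [Fintype ι] (v w : ι → ℝ) : (inner ℝ (toE v) (toE w) : ℝ) = v ⬝ᵥ w := by
  simp [PiLp.inner_apply, toE, dotProduct, RCLike.inner_apply, mul_comm]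

lemma norm_toE_sq {ι : Type*} [Fintype ι] (v : ι → ℝ) : ‖toE v‖^2 = v ⬝ᵥ v := by
  rw [← inner_toE]; exact (real_inner_self_eq_norm_sq _).symm

lemma dot_mulVec_left {m n : Type*} [Fintype m] [Fintype n] (M : Matrix m n ℝ)
    (u : n → ℝ) (z : m → ℝ) : (M *ᵥ u) ⬝ᵥ z = u ⬝ᵥ (Mᵀ *ᵥ z) := by
  rw [dotProduct_comm, dotProduct_mulVec, ← mulVec_transpose, dotProduct_comm]

lemma opNorm_nonneg' {m : Type*} [Fintype m] {n : ℕ} (A : Matrix m (Fin n) ℝ) : 0 ≤ opNorm A :=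
  norm_nonneg _

lemma le_opNorm' {m : Type*} [Fintype m] {n : ℕ} (A : Matrix m (Fin n) ℝ) (x : Fin n → ℝ) :
    ‖toE (A *ᵥ x)‖ ≤ opNorm A * ‖toE x‖ :=
  (Matrix.toEuclideanLin A).toContinuousLinearMap.le_opNorm (toE x)

lemma opNorm_le' {m : Type*} [Fintype m] {n : ℕ} (A : Matrix m (Fin n) ℝ) {c : ℝ} (hc : 0 ≤ c)
    (h : ∀ x : Fin n → ℝ, ‖toE (A *ᵥ x)‖ ≤ c * ‖toE x‖) : opNorm A ≤ c :=
  ContinuousLinearMap.opNorm_le_bound _ hc (fun x => h x.ofLp)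

-- isometry
lemma norm_mulVec_iso {n : Type*} [Fintype n] {k : Type*} [Fintype k] [DecidableEq k]
    (V : Matrix n k ℝ) (hV : Vᵀ * V = 1) (x : k → ℝ) : ‖toE (V *ᵥ x)‖ = ‖toE x‖ := by
  have h : ‖toE (V *ᵥ x)‖^2 = ‖toE x‖^2 := by
    rw [norm_toE_sq, norm_toE_sq, dot_mulVec_left, mulVec_mulVec, hV, one_mulVec]
  nlinarith [norm_nonneg (toE (V *ᵥ x)), norm_nonneg (toE x)]

-- contraction by Vᵀ
lemma norm_mulVec_transpose_le {n k : Type*} [Fintype n] [Fintype k] [DecidableEq k] (V : Matrix n k ℝ)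
    (hV : Vᵀ * V = 1) (z : n → ℝ) : ‖toE (Vᵀ *ᵥ z)‖ ≤ ‖toE z‖ := by
  have h1 : ‖toE (Vᵀ *ᵥ z)‖^2 = (inner ℝ (toE (V *ᵥ (Vᵀ *ᵥ z))) (toE z) : ℝ) := by
    rw [norm_toE_sq, inner_toE]
    conv_rhs => rw [dot_mulVec_left]
  have h2 := real_inner_le_norm (toE (V *ᵥ (Vᵀ *ᵥ z))) (toE z)
  rw [norm_mulVec_iso V hV] at h2
  nlinarith [norm_nonneg (toE (Vᵀ *ᵥ z)), norm_nonneg (toE z)]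

-- Pythagoras for 1 - V Vᵀ
lemma norm_sub_proj_sq {n k : Type*} [Fintype n] [Fintype k] [DecidableEq n] [DecidableEq k]
    (V : Matrix n k ℝ) (hV : Vᵀ * V = 1) (w : n → ℝ) :
    ‖toE ((1 - V * Vᵀ) *ᵥ w)‖^2 = ‖toE w‖^2 - ‖toE (Vᵀ *ᵥ w)‖^2 := by
  have e1 : (1 - V * Vᵀ) *ᵥ w = w - V *ᵥ (Vᵀ *ᵥ w) := by
    rw [sub_mulVec, one_mulVec, mulVec_mulVec]
  have hVV : (V *ᵥ (Vᵀ *ᵥ w)) ⬝ᵥ (V *ᵥ (Vᵀ *ᵥ w)) = (Vᵀ *ᵥ w) ⬝ᵥ (Vᵀ *ᵥ w) := by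
    rw [dot_mulVec_left, mulVec_mulVec, hV, one_mulVec]
  have hcross : w ⬝ᵥ (V *ᵥ (Vᵀ *ᵥ w)) = (Vᵀ *ᵥ w) ⬝ᵥ (Vᵀ *ᵥ w) := by
    rw [dotProduct_mulVec, ← mulVec_transpose]
  have hcross2 : (V *ᵥ (Vᵀ *ᵥ w)) ⬝ᵥ w = (Vᵀ *ᵥ w) ⬝ᵥ (Vᵀ *ᵥ w) := by
    rw [dotProduct_comm, hcross]
  rw [norm_toE_sq, norm_toE_sq, norm_toE_sq, e1, sub_dotProduct, dotProduct_sub,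
    dotProduct_sub, hVV, hcross, hcross2]
  ring

lemma norm_sub_proj_le {n k : Type*} [Fintype n] [Fintype k] [DecidableEq n] [DecidableEq k]
    (V : Matrix n k ℝ) (hV : Vᵀ * V = 1) (w : n → ℝ) :
    ‖toE ((1 - V * Vᵀ) *ᵥ w)‖ ≤ ‖toE w‖ := by
  have h := norm_sub_proj_sq V hV w
  nlinarith [norm_nonneg (toE ((1 - V * Vᵀ) *ᵥ w)), norm_nonneg (toE w),
    sq_nonneg ‖toE (Vᵀ *ᵥ w)‖]

lemma mulVec_mem_rowSpace {m : Type*} [Fintype m] {n : ℕ} (N : Matrix m (Fin n) ℝ)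
    (v : m → ℝ) : toEuc (Nᵀ *ᵥ v) ∈ rowSpace N := by
  have h : toEuc (Nᵀ *ᵥ v) = ∑ k, v k • toEuc (N k) := by
    ext j
    rw [WithLp.ofLp_sum, Finset.sum_apply]
    simp [toEuc, mulVec, dotProduct, mul_comm]
  rw [h]
  exact Submodule.sum_mem _ fun k _ =>
    Submodule.smul_mem _ _ (Submodule.subset_span ⟨k, rfl⟩)

lemma rowSpace_mul_le {m₁ m₂ : Type*} [Fintype m₂] {n : ℕ} (M : Matrix m₁ m₂ ℝ)
    (N : Matrix m₂ (Fin n) ℝ) : rowSpace (M * N) ≤ rowSpace N := by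
  rw [rowSpace, Submodule.span_le]
  rintro _ ⟨i, rfl⟩
  have h : (M * N) i = Nᵀ *ᵥ (M i) := by
    funext j
    simp [Matrix.mul_apply, mulVec, dotProduct, mul_comm]
  show toEuc ((M * N) i) ∈ rowSpace N
  rw [h]
  exact mulVec_mem_rowSpace N (M i)

lemma rowSpace_trunc {d n rt : ℕ} (U : Matrix (Fin d) (Fin rt) ℝ)
    (V : Matrix (Fin n) (Fin rt) ℝ) (σ : Fin rt → ℝ) (hU : Uᵀ * U = 1)
    (hσ : ∀ i, 0 < σ i) :
    rowSpace (U * Matrix.diagonal σ * Vᵀ) = rowSpace Vᵀ := by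
  refine le_antisymm (rowSpace_mul_le _ _) ?_
  rw [rowSpace, Submodule.span_le]
  rintro _ ⟨j, rfl⟩
  have h1 : Matrix.diagonal σ * Vᵀ = Uᵀ * (U * Matrix.diagonal σ * Vᵀ) := by
    rw [← Matrix.mul_assoc, ← Matrix.mul_assoc, hU, Matrix.one_mul]
  have h2 : rowSpace (Matrix.diagonal σ * Vᵀ) ≤ rowSpace (U * Matrix.diagonal σ * Vᵀ) := by
    rw [h1]; exact rowSpace_mul_le _ _
  have h3 : toEuc (Vᵀ j) = (σ j)⁻¹ • toEuc ((Matrix.diagonal σ * Vᵀ) j) := by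
    ext l
    simp [toEuc, Matrix.mul_apply, Matrix.diagonal, Finset.mul_sum]
    rw [← mul_assoc, inv_mul_cancel₀ (hσ j).ne', one_mul]
  show toEuc (Vᵀ j) ∈ _
  rw [h3]
  exact Submodule.smul_mem _ _ (h2 (Submodule.subset_span ⟨j, rfl⟩))

lemma projMat_eq {n rt : ℕ} (V : Matrix (Fin n) (Fin rt) ℝ) (hV : Vᵀ * V = 1) :
    projMat (rowSpace Vᵀ) = V * Vᵀ := by
  rw [projMat, LinearEquiv.symm_apply_eq]
  apply LinearMap.ext
  intro x
  show ((rowSpace Vᵀ).starProjection x)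
      = toE ((V * Vᵀ) *ᵥ x.ofLp)
  apply Submodule.eq_starProjection_of_mem_orthogonal
  · have : toE ((V * Vᵀ) *ᵥ x.ofLp) = toEuc (Vᵀᵀ *ᵥ (Vᵀ *ᵥ x.ofLp)) := by
      rw [mulVec_mulVec, transpose_transpose]; rfl
    rw [this]
    exact mulVec_mem_rowSpace Vᵀ _
  · rw [Submodule.mem_orthogonal]
    intro u hu
    set xf : Fin n → ℝ := x.ofLp with hxf
    have hzero : Vᵀ *ᵥ (xf - (V * Vᵀ) *ᵥ xf) = 0 := by
      rw [Matrix.mulVec_sub, mulVec_mulVec, ← Matrix.mul_assoc, hV, Matrix.one_mul, sub_self]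
    have hw : x - toE ((V * Vᵀ) *ᵥ x.ofLp) = toE (xf - (V * Vᵀ) *ᵥ xf) := rfl
    rw [hw]
    induction hu using Submodule.span_induction with
    | mem u hu =>
        obtain ⟨j, rfl⟩ := hu
        show (inner ℝ (toE (Vᵀ j)) _ : ℝ) = 0
        rw [inner_toE]
        show (Vᵀ *ᵥ (xf - (V * Vᵀ) *ᵥ xf)) j = 0
        rw [hzero]; rfl
    | zero => exact inner_zero_left _
    | add u v _ _ hu hv => rw [inner_add_left, hu, hv, add_zero]
    | smul c u _ hu => rw [inner_smul_left, hu, mul_zero]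

set_option maxHeartbeats 2000000 in
/-- Wedin bound, under-specified rank.
`A` has rank `r`, `A₁ = U₁ Σ₁ V₁ᵀ` is the rank-`r̃` truncated SVD of `A` (`r̃ < r`),
`A₀ = A − A₁`, and `Ã = Ũ Σ̃ Ṽᵀ` is the rank-`r̃` truncated SVD of `X = A + E`.
Then the sine of the largest principal angle between `row A₁` and `row Ã` is at most
`min (max ‖(E + A₀) Ṽ‖ ‖(E + A₀)ᵀ Ũ‖ / σ_min(Ã)) 1`. -/
theorem wedin_bound_under_rank (d n r rt : ℕ) (hrt : 0 < rt) (hrtr : rt < r)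
    (hrn : rt ≤ n) (hrd : rt ≤ d)
    (A E X : Matrix (Fin d) (Fin n) ℝ) (hA : A.rank = r) (hX : X = A + E)
    -- rank-`rt` truncated SVD `A₁` of `A`
    (U1 : Matrix (Fin d) (Fin rt) ℝ) (V1 : Matrix (Fin n) (Fin rt) ℝ) (σ1 : Fin rt → ℝ)
    (hU1 : U1ᵀ * U1 = 1) (hV1 : V1ᵀ * V1 = 1)
    (hσ1pos : ∀ i, 0 < σ1 i) (hσ1mono : Antitone σ1)
    (hAsv1 : A * V1 = U1 * Matrix.diagonal σ1)
    (hAsv2 : Aᵀ * U1 = V1 * Matrix.diagonal σ1)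
    (hA1top : ∀ i : Fin rt, σ1 i = svalDesc A (Fin.castLE hrn i))
    -- rank-`rt` truncated SVD `Ã` of `X`
    (Ut : Matrix (Fin d) (Fin rt) ℝ) (Vt : Matrix (Fin n) (Fin rt) ℝ) (σd : Fin rt → ℝ)
    (hUt : Utᵀ * Ut = 1) (hVt : Vtᵀ * Vt = 1)
    (hσpos : ∀ i, 0 < σd i) (hσmono : Antitone σd)
    (hsv1 : X * Vt = Ut * Matrix.diagonal σd)
    (hsv2 : Xᵀ * Ut = Vt * Matrix.diagonal σd)
    (htop : ∀ i : Fin rt, σd i = svalDesc X (Fin.castLE hrn i)) :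
    opNorm ((1 - projMat (rowSpace (Ut * Matrix.diagonal σd * Vtᵀ))) *
        projMat (rowSpace (U1 * Matrix.diagonal σ1 * V1ᵀ)))
      ≤ min (max (opNorm ((E + (A - U1 * Matrix.diagonal σ1 * V1ᵀ)) * Vt))
              (opNorm ((E + (A - U1 * Matrix.diagonal σ1 * V1ᵀ))ᵀ * Ut))
            / σd ⟨rt - 1, by omega⟩) 1 := by
  set i0 : Fin rt := ⟨rt - 1, by omega⟩ with hi0def
  set Z := E + (A - U1 * Matrix.diagonal σ1 * V1ᵀ) with hZdef
  have hZX : Z = X - U1 * Matrix.diagonal σ1 * V1ᵀ := by rw [hZdef, hX]; abel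
  have hProj1 : projMat (rowSpace (U1 * Matrix.diagonal σ1 * V1ᵀ)) = V1 * V1ᵀ := by
    rw [rowSpace_trunc U1 V1 σ1 hU1 hσ1pos]; exact projMat_eq V1 hV1
  have hProjt : projMat (rowSpace (Ut * Matrix.diagonal σd * Vtᵀ)) = Vt * Vtᵀ := by
    rw [rowSpace_trunc Ut Vt σd hUt hσpos]; exact projMat_eq Vt hVt
  rw [hProj1, hProjt]
  show opNorm ((1 - Vt * Vtᵀ) * (V1 * V1ᵀ))
      ≤ min (max (opNorm (Z * Vt)) (opNorm (Zᵀ * Ut)) / σd i0) 1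
  set mx := max (opNorm (Z * Vt)) (opNorm (Zᵀ * Ut)) with hmxdef
  set σ0 := σd i0 with hσ0def
  set a := mx / σ0 with hadef
  have hσ0 : 0 < σ0 := hσpos i0
  have hmx0 : 0 ≤ mx := le_trans (opNorm_nonneg' _) (le_max_left _ _)
  have hmx2 : opNorm (Zᵀ * Ut) ≤ mx := le_max_right _ _
  have ha0 : 0 ≤ a := div_nonneg hmx0 hσ0.le
  have hσle : ∀ i : Fin rt, σ0 ≤ σd i := by
    intro i
    have hle : (i : ℕ) ≤ rt - 1 := by have := i.isLt; omega
    exact hσmono (by rw [hi0def]; exact hle)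
  -- the trivial bound by 1
  have bound1 : opNorm ((1 - Vt * Vtᵀ) * (V1 * V1ᵀ)) ≤ 1 := by
    apply opNorm_le' _ zero_le_one
    intro z
    rw [← mulVec_mulVec, ← mulVec_mulVec]
    calc ‖toE ((1 - Vt * Vtᵀ) *ᵥ (V1 *ᵥ (V1ᵀ *ᵥ z)))‖
        ≤ ‖toE (V1 *ᵥ (V1ᵀ *ᵥ z))‖ := norm_sub_proj_le Vt hVt _
      _ = ‖toE (V1ᵀ *ᵥ z)‖ := norm_mulVec_iso V1 hV1 _
      _ ≤ ‖toE z‖ := norm_mulVec_transpose_le V1 hV1 z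
      _ = 1 * ‖toE z‖ := (one_mul _).symm
  -- key matrix identity
  have hQV1 : (1 - V1 * V1ᵀ) * V1 = 0 := by
    rw [Matrix.sub_mul, Matrix.one_mul, Matrix.mul_assoc, hV1, Matrix.mul_one, sub_self]
  have hZt : Zᵀ = Xᵀ - V1 * (Matrix.diagonal σ1 * U1ᵀ) := by
    rw [hZX, transpose_sub]
    congr 1
    rw [transpose_mul, transpose_mul, transpose_transpose, diagonal_transpose]
  have h0 : (1 - V1 * V1ᵀ) * (V1 * (Matrix.diagonal σ1 * U1ᵀ) * Ut) = 0 := by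
    rw [Matrix.mul_assoc V1, ← Matrix.mul_assoc (1 - V1 * V1ᵀ), hQV1, Matrix.zero_mul]
  have hkey : (1 - V1 * V1ᵀ) * (Vt * Matrix.diagonal σd) = (1 - V1 * V1ᵀ) * (Zᵀ * Ut) := by
    have e : Zᵀ * Ut = Xᵀ * Ut - V1 * (Matrix.diagonal σ1 * U1ᵀ) * Ut := by
      rw [hZt, Matrix.sub_mul]
    rw [e, Matrix.mul_sub, h0, sub_zero, hsv2]
  -- Key1 : easy-direction bound
  have Key1 : ∀ y : Fin rt → ℝ,
      ‖toE ((1 - V1 * V1ᵀ) *ᵥ (Vt *ᵥ y))‖ ≤ a * ‖toE y‖ := by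
    intro y
    set y' : Fin rt → ℝ := fun i => (σd i)⁻¹ * y i with hy'
    have hDy' : Matrix.diagonal σd *ᵥ y' = y := by
      funext i
      rw [mulVec_diagonal]
      show σd i * ((σd i)⁻¹ * y i) = y i
      rw [← mul_assoc, mul_inv_cancel₀ (hσpos i).ne', one_mul]
    have hrew : (1 - V1 * V1ᵀ) *ᵥ (Vt *ᵥ y) = (1 - V1 * V1ᵀ) *ᵥ ((Zᵀ * Ut) *ᵥ y') := by
      conv_lhs => rw [← hDy']
      rw [mulVec_mulVec, mulVec_mulVec, Matrix.mul_assoc, hkey, ← mulVec_mulVec]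
    rw [hrew]
    have h1 : ‖toE ((1 - V1 * V1ᵀ) *ᵥ ((Zᵀ * Ut) *ᵥ y'))‖ ≤ ‖toE ((Zᵀ * Ut) *ᵥ y')‖ :=
      norm_sub_proj_le V1 hV1 _
    have h2 : ‖toE ((Zᵀ * Ut) *ᵥ y')‖ ≤ opNorm (Zᵀ * Ut) * ‖toE y'‖ := le_opNorm' _ _
    have h3 : ‖toE y'‖ ≤ σ0⁻¹ * ‖toE y‖ := by
      have hsq : ‖toE y'‖ ^ 2 ≤ (σ0⁻¹ * ‖toE y‖) ^ 2 := by
        rw [norm_toE_sq, mul_pow, norm_toE_sq]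
        have : y' ⬝ᵥ y' = ∑ i, ((σd i)⁻¹ * y i) * ((σd i)⁻¹ * y i) := rfl
        rw [this]
        rw [show y ⬝ᵥ y = ∑ i, y i * y i from rfl, Finset.mul_sum]
        apply Finset.sum_le_sum
        intro i _
        have hinv : (σd i)⁻¹ ≤ σ0⁻¹ := by
          apply inv_anti₀ hσ0 (hσle i)
        have h2' : ((σd i)⁻¹) ^ 2 ≤ (σ0⁻¹) ^ 2 := by
          apply pow_le_pow_left₀ (inv_nonneg.mpr (hσpos i).le) hinv
        calc ((σd i)⁻¹ * y i) * ((σd i)⁻¹ * y i) = ((σd i)⁻¹) ^ 2 * (y i * y i) := by ring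
          _ ≤ (σ0⁻¹) ^ 2 * (y i * y i) :=
              mul_le_mul_of_nonneg_right h2' (mul_self_nonneg _)
          _ = σ0⁻¹ ^ 2 * (y i * y i) := by ring
      exact le_of_pow_le_pow_left₀ two_ne_zero (by positivity) hsq
    have hnn : 0 ≤ ‖toE y'‖ := norm_nonneg _
    calc ‖toE ((1 - V1 * V1ᵀ) *ᵥ ((Zᵀ * Ut) *ᵥ y'))‖
        ≤ opNorm (Zᵀ * Ut) * ‖toE y'‖ := h1.trans h2
      _ ≤ mx * (σ0⁻¹ * ‖toE y‖) := by
          apply mul_le_mul hmx2 h3 hnn hmx0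
      _ = a * ‖toE y‖ := by rw [hadef, div_eq_mul_inv]; ring
  -- Key2 : quantitative injectivity of V1ᵀ Vt
  have Key2 : ∀ y : Fin rt → ℝ,
      (1 - a ^ 2) * ‖toE y‖ ^ 2 ≤ ‖toE ((V1ᵀ * Vt) *ᵥ y)‖ ^ 2 := by
    intro y
    have h4 := norm_sub_proj_sq V1 hV1 (Vt *ᵥ y)
    rw [norm_mulVec_iso Vt hVt] at h4
    have e4 : V1ᵀ *ᵥ (Vt *ᵥ y) = (V1ᵀ * Vt) *ᵥ y := mulVec_mulVec y V1ᵀ Vt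
    rw [e4] at h4
    have h6 := Key1 y
    nlinarith [norm_nonneg (toE ((1 - V1 * V1ᵀ) *ᵥ (Vt *ᵥ y))), norm_nonneg (toE y), ha0,
      mul_self_le_mul_self (norm_nonneg (toE ((1 - V1 * V1ᵀ) *ᵥ (Vt *ᵥ y)))) h6]
  rcases lt_or_ge a 1 with ha1 | ha1
  · -- hard case : a < 1
    refine le_min ?_ bound1
    set b := Real.sqrt (1 - a ^ 2) with hbdef
    have haa : 0 < 1 - a ^ 2 := by
      nlinarith [mul_pos (by linarith : (0:ℝ) < 1 - a) (by linarith : (0:ℝ) < 1 + a)]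
    have hb2 : b ^ 2 = 1 - a ^ 2 := Real.sq_sqrt haa.le
    have hbpos : 0 < b := Real.sqrt_pos.mpr haa
    -- injectivity and surjectivity of V1ᵀ Vt
    have hzero : ∀ w : Fin rt → ℝ, (V1ᵀ * Vt) *ᵥ w = 0 → w = 0 := by
      intro w hw
      have h7 := Key2 w
      rw [hw] at h7
      have h8 : ‖toE ((0 : Fin rt → ℝ))‖ = 0 := norm_zero
      rw [h8] at h7
      have h9 : ‖toE w‖ ^ 2 ≤ 0 :=
        le_of_mul_le_mul_left (by nlinarith : (1 - a ^ 2) * ‖toE w‖ ^ 2 ≤ (1 - a ^ 2) * 0) haa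
      have h9' : ‖toE w‖ ^ 2 = 0 := le_antisymm h9 (sq_nonneg _)
      have h9'' : ‖toE w‖ = 0 := by
        have := pow_eq_zero_iff (n := 2) two_ne_zero |>.mp h9'
        exact this
      have : toE w = 0 := norm_eq_zero.mp h9''
      simpa [toE] using this
    have hinj : Function.Injective (Matrix.mulVecLin (V1ᵀ * Vt)) := by
      intro u v huv
      have h10 : (V1ᵀ * Vt) *ᵥ (u - v) = 0 := by
        rw [Matrix.mulVec_sub]
        have := congrArg (fun t => t - (V1ᵀ * Vt) *ᵥ v) huv
        simp only [Matrix.mulVecLin_apply, sub_self] at this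
        simpa using this
      have := hzero _ h10
      exact sub_eq_zero.mp this
    have hsurj : Function.Surjective (Matrix.mulVecLin (V1ᵀ * Vt)) :=
      LinearMap.injective_iff_surjective.mp hinj
    -- Key4 : lower bound for the adjoint direction
    have Key4 : ∀ x : Fin rt → ℝ, b * ‖toE x‖ ≤ ‖toE ((Vtᵀ * V1) *ᵥ x)‖ := by
      intro x
      obtain ⟨y, hy⟩ := hsurj x
      have hy' : (V1ᵀ * Vt) *ᵥ y = x := by
        simp only [Matrix.mulVecLin_apply] at hy; exact hy
      have h7 := Key2 y
      rw [hy'] at h7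
      have hby : b * ‖toE y‖ ≤ ‖toE x‖ := by
        have hsq : (b * ‖toE y‖) ^ 2 ≤ ‖toE x‖ ^ 2 := by
          rw [mul_pow, hb2]; exact h7
        exact le_of_pow_le_pow_left₀ two_ne_zero (norm_nonneg _) hsq
      have hCS : ‖toE x‖ ^ 2 ≤ ‖toE y‖ * ‖toE ((Vtᵀ * V1) *ᵥ x)‖ := by
        have e1 : ‖toE x‖ ^ 2 = y ⬝ᵥ ((Vtᵀ * V1) *ᵥ x) := by
          rw [norm_toE_sq]
          have e2 : x ⬝ᵥ x = ((V1ᵀ * Vt) *ᵥ y) ⬝ᵥ x := by rw [hy']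
          rw [e2, dot_mulVec_left, transpose_mul, transpose_transpose]
        rw [e1, ← inner_toE]
        exact real_inner_le_norm _ _
      rcases eq_or_lt_of_le (norm_nonneg (toE x)) with hx0 | hx0
      · rw [← hx0, mul_zero]; exact norm_nonneg _
      · have h11 : b * ‖toE x‖ ^ 2 ≤ b * (‖toE y‖ * ‖toE ((Vtᵀ * V1) *ᵥ x)‖) :=
          mul_le_mul_of_nonneg_left hCS hbpos.le
        have h12 : b * ‖toE y‖ * ‖toE ((Vtᵀ * V1) *ᵥ x)‖
            ≤ ‖toE x‖ * ‖toE ((Vtᵀ * V1) *ᵥ x)‖ :=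
          mul_le_mul_of_nonneg_right hby (norm_nonneg _)
        nlinarith
    -- final estimate
    apply opNorm_le' _ ha0
    intro z
    rw [← mulVec_mulVec, ← mulVec_mulVec]
    set x := V1ᵀ *ᵥ z with hxdef
    have h10 := norm_sub_proj_sq Vt hVt (V1 *ᵥ x)
    rw [norm_mulVec_iso V1 hV1] at h10
    have e10 : Vtᵀ *ᵥ (V1 *ᵥ x) = (Vtᵀ * V1) *ᵥ x := mulVec_mulVec x Vtᵀ V1
    rw [e10] at h10
    have h11 := Key4 x
    have hxz : ‖toE x‖ ≤ ‖toE z‖ := norm_mulVec_transpose_le V1 hV1 z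
    have hfin : ‖toE ((1 - Vt * Vtᵀ) *ᵥ (V1 *ᵥ x))‖ ^ 2 ≤ (a * ‖toE z‖) ^ 2 := by
      rw [h10]
      have hq1 : (b * ‖toE x‖) ^ 2 ≤ ‖toE ((Vtᵀ * V1) *ᵥ x)‖ ^ 2 := by
        have := mul_self_le_mul_self (by positivity) h11
        nlinarith
      have hq2 : (a * ‖toE x‖) ^ 2 ≤ (a * ‖toE z‖) ^ 2 :=
        pow_le_pow_left₀ (mul_nonneg ha0 (norm_nonneg _))
          (mul_le_mul_of_nonneg_left hxz ha0) 2
      nlinarith [hb2, norm_nonneg (toE x)]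
    exact le_of_pow_le_pow_left₀ two_ne_zero (by positivity) hfin
  · -- easy case : 1 ≤ a
    exact le_min (bound1.trans ha1) bound1
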